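/- Consider a birth–death Markov chain on the nonnegative integers such that from every state k \ge 1, the probability of moving to k-1 is at least k times the probability of moving to k+1 (and otherwise the chain stays put). Started from state 1, the probability that the chain reaches state m before reaching state 0 is at most 1/(m-1)!. -/
import Mathlib


/-- For a birth–death chain on `{0,1,...}` in which from every state
`1 ≤ k < m` the probability `q k` of moving down satisfies `q k ≥ k * p k` where
`p k > 0` is the probability of moving up (and `r k ≥ 0` of staying put,
`p k + q k + r k = 1`), the probability `h 1` of hitting `m` before `0` starting
from `1` is at most `1/(m-1)!`. Here `h` is the hitting-probability function,
characterized by its boundary values and harmonicity. -/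
theorem stmt3 (m : ℕ) (hm : 2 ≤ m) (p q r h : ℕ → ℝ)
    (hprob : ∀ k, 1 ≤ k → k < m → p k + q k + r k = 1 ∧ 0 < p k ∧ (k : ℝ) * p k ≤ q k ∧ 0 ≤ r k)
    (h0 : h 0 = 0) (hm1 : h m = 1)
    (hrange : ∀ k, 0 ≤ h k ∧ h k ≤ 1)
    (hrec : ∀ k, 1 ≤ k → k < m → h k = q k * h (k - 1) + p k * h (k + 1) + r k * h k) :
    h 1 ≤ 1 / (Nat.factorial (m - 1)) := by
  have h1nn : 0 ≤ h 1 := (hrange 1).1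
  have key : ∀ k, k + 1 ≤ m → (Nat.factorial k : ℝ) * h 1 ≤ h (k + 1) - h k := by
    intro k
    induction k with
    | zero => intro _; simp [Nat.factorial, h0]
    | succ k IH =>
      intro hk
      have IH' := IH (by omega)
      have hlt : k + 1 < m := by omega
      obtain ⟨hsum, hp, hq, hr⟩ := hprob (k + 1) (by omega) hlt
      have hrec' := hrec (k + 1) (by omega) hlt
      simp only [Nat.add_sub_cancel] at hrec'
      have hfac : 0 ≤ (Nat.factorial k : ℝ) * h 1 := by positivity
      have hd : 0 ≤ h (k + 1) - h k := le_trans hfac IH'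
      -- p * (h(k+2) - h(k+1)) = q * (h(k+1) - h k)
      have e : p (k+1) * (h (k+1+1) - h (k+1)) = q (k+1) * (h (k+1) - h k) := by
        nlinarith [hrec', hsum, (hrange (k+1)).1]
      have step : ((k:ℝ) + 1) * (h (k+1) - h k) ≤ h (k+1+1) - h (k+1) := by
        have h2 : ((k:ℝ)+1) * p (k+1) * (h (k+1) - h k) ≤ q (k+1) * (h (k+1) - h k) := by
          apply mul_le_mul_of_nonneg_right _ hd
          exact_mod_cast hq
        nlinarith [h2, e, hp]
      have : (Nat.factorial (k+1) : ℝ) * h 1 = ((k:ℝ)+1) * ((Nat.factorial k : ℝ) * h 1) := by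
        push_cast [Nat.factorial_succ]; ring
      rw [this]
      calc ((k:ℝ)+1) * ((Nat.factorial k : ℝ) * h 1)
          ≤ ((k:ℝ)+1) * (h (k+1) - h k) := by
            apply mul_le_mul_of_nonneg_left IH'; positivity
        _ ≤ h (k+1+1) - h (k+1) := step
  have hK := key (m - 1) (by omega)
  have hme : m - 1 + 1 = m := by omega
  rw [hme] at hK
  have h2 : h m - h (m - 1) ≤ 1 := by
    have := (hrange (m-1)).1; linarith [hm1]
  have hfpos : (0:ℝ) < (Nat.factorial (m-1) : ℝ) := by positivity
  rw [le_div_iff₀ hfpos]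
  linarith
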